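/- Let a = (a_0,...,a_D) ∈ K^{D+1}, A = Σ_{i=0}^D a_i x^i, and let ω ∈ ker(H^k_a). Define r_0,...,r_{k−1} as the products of the top k−1 rows of the upper-triangular Hankel completion against ω (i.e., r_m = Σ_{j: m−k+j ≥ 0} a_{m−k+j} ω_j for 0 ≤ m ≤ k−1). Then A(x) · P_ω(1,x) ≡ Σ_{i=0}^{k−1} r_i x^i (mod x^{D+1}), i.e., (P_ω(1,x), Σ r_i x^i) is a rational reconstruction of A modulo x^{D+1}. -/

import Mathlib

/-- Pad a finite vector to a function on `ℕ` by zeros. -/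
noncomputable def pad {K : Type*} [Zero K] {n : ℕ} (c : Fin n → K) : ℕ → K :=
  fun i => if h : i < n then c ⟨i, h⟩ else 0

/-- The Hankel matrix `H^k_a ∈ K^{(D-k+1)×(k+1)}` with `(i,j)` entry `a_{i+j}`. -/
noncomputable def hankel {K : Type*} [Field K] (a : ℕ → K) (D k : ℕ) :
    Matrix (Fin (D - k + 1)) (Fin (k + 1)) K :=
  fun i j => a (i.1 + j.1)

/-- The binary form `P_v = ∑ v_i x^i y^{n-i}`. -/
noncomputable def binForm (K : Type*) [Field K] (v : ℕ → K) (n : ℕ) :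
    MvPolynomial (Fin 2) K :=
  ∑ i ∈ Finset.range (n + 1),
    MvPolynomial.C (v i) * MvPolynomial.X 0 ^ i * MvPolynomial.X 1 ^ (n - i)


/-- A kernel vector of `H^k_a` yields a rational reconstruction of `A` modulo `x^{D+1}`. -/
theorem stmt5 {K : Type*} [Field K] (D k : ℕ) (hk : 1 ≤ k) (hkD : k ≤ D) (a : ℕ → K)
    (ω : Fin (k + 1) → K) (hω : (hankel a D k).mulVec ω = 0)
    (r : ℕ → K)
    (hr : ∀ m, m < k →
      r m = ∑ j ∈ Finset.range (k + 1),
        (if k ≤ m + j then a (m + j - k) else 0) * pad ω j) :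
    (Polynomial.X : Polynomial K) ^ (D + 1) ∣
      ((∑ i ∈ Finset.range (D + 1), Polynomial.C (a i) * Polynomial.X ^ i) *
        (∑ i ∈ Finset.range (k + 1), Polynomial.C (pad ω (k - i)) * Polynomial.X ^ i)
       - ∑ i ∈ Finset.range k, Polynomial.C (r i) * Polynomial.X ^ i) := by
  rw [Polynomial.X_pow_dvd_iff]
  intro d hd
  have hdD : d ≤ D := Nat.lt_succ_iff.mp hd
  have hcA : ∀ n, (∑ i ∈ Finset.range (D + 1),
      Polynomial.C (a i) * Polynomial.X ^ i : Polynomial K).coeff n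
      = if n < D + 1 then a n else 0 := by
    intro n
    rw [Polynomial.finset_sum_coeff]
    simp [Polynomial.coeff_C_mul, Polynomial.coeff_X_pow]
  have hcU : ∀ n, (∑ i ∈ Finset.range (k + 1),
      Polynomial.C (pad ω (k - i)) * Polynomial.X ^ i : Polynomial K).coeff n
      = if n < k + 1 then pad ω (k - n) else 0 := by
    intro n
    rw [Polynomial.finset_sum_coeff]
    simp [Polynomial.coeff_C_mul, Polynomial.coeff_X_pow]
  have hcR : ∀ n, (∑ i ∈ Finset.range k,
      Polynomial.C (r i) * Polynomial.X ^ i : Polynomial K).coeff n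
      = if n < k then r n else 0 := by
    intro n
    rw [Polynomial.finset_sum_coeff]
    simp [Polynomial.coeff_C_mul, Polynomial.coeff_X_pow]
  rw [Polynomial.coeff_sub, Polynomial.coeff_mul, hcR,
    Finset.Nat.sum_antidiagonal_eq_sum_range_succ_mk]
  simp only [hcA, hcU]
  rcases lt_or_ge d k with h | h
  · -- d < k : sum equals r d
    rw [if_pos h, sub_eq_zero, hr d h]
    have h1 : ∀ i ∈ Finset.range (d + 1),
        (if i < D + 1 then a i else 0) * (if d - i < k + 1 then pad ω (k - (d - i)) else 0)
        = a i * pad ω (k - d + i) := by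
      intro i hi
      rw [Finset.mem_range] at hi
      have hi' : i ≤ d := Nat.lt_succ_iff.mp hi
      rw [if_pos (lt_of_le_of_lt (le_trans hi' hdD) (Nat.lt_succ_self D)),
        if_pos (lt_of_le_of_lt (Nat.sub_le d i |>.trans (le_of_lt h)) (Nat.lt_succ_self k))]
      congr 2
      omega
    rw [Finset.sum_congr rfl h1]
    symm
    -- split range (k+1) at k - d
    rw [Finset.range_eq_Ico, ← Finset.sum_Ico_consecutive _ (Nat.zero_le (k - d))
      (by omega : k - d ≤ k + 1)]
    have h2 : ∀ j ∈ Finset.Ico 0 (k - d),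
        (if k ≤ d + j then a (d + j - k) else 0) * pad ω j = 0 := by
      intro j hj
      rw [Finset.mem_Ico] at hj
      rw [if_neg (by omega), zero_mul]
    rw [Finset.sum_congr rfl h2, Finset.sum_const_zero, zero_add,
      Finset.sum_Ico_eq_sum_range]
    have h3 : k + 1 - (k - d) = d + 1 := by omega
    rw [h3]
    refine Finset.sum_congr rfl fun i hi => ?_
    rw [Finset.mem_range] at hi
    rw [if_pos (by omega)]
    congr 2
    omega
  · -- k ≤ d : kernel relation
    rw [if_neg (not_lt.mpr h), sub_zero]
    have h1 : ∀ i ∈ Finset.range (d + 1),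
        (if i < D + 1 then a i else 0) * (if d - i < k + 1 then pad ω (k - (d - i)) else 0)
        = if d - k ≤ i then a i * pad ω (k - (d - i)) else 0 := by
      intro i hi
      rw [Finset.mem_range] at hi
      rw [if_pos (by omega)]
      rcases le_or_gt (d - k) i with hc | hc
      · rw [if_pos (by omega), if_pos hc]
      · rw [if_neg (by omega), if_neg (not_le.mpr hc), mul_zero]
    rw [Finset.sum_congr rfl h1, Finset.range_eq_Ico,
      ← Finset.sum_Ico_consecutive _ (Nat.zero_le (d - k)) (by omega)]
    have h2 : ∀ j ∈ Finset.Ico 0 (d - k),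
        (if d - k ≤ j then a j * pad ω (k - (d - j)) else 0) = 0 := by
      intro j hj
      rw [Finset.mem_Ico] at hj
      rw [if_neg (by omega)]
    rw [Finset.sum_congr rfl h2, Finset.sum_const_zero, zero_add,
      Finset.sum_Ico_eq_sum_range]
    have h3 : d + 1 - (d - k) = k + 1 := by omega
    rw [h3]
    have hrow : d - k < D - k + 1 := by omega
    have := congrFun hω ⟨d - k, hrow⟩
    simp only [Matrix.mulVec, dotProduct, hankel, Pi.zero_apply] at this
    calc ∑ j ∈ Finset.range (k + 1),
          (if d - k ≤ d - k + j then a (d - k + j) * pad ω (k - (d - (d - k + j))) else 0)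
        = ∑ j ∈ Finset.range (k + 1), a (d - k + j) * pad ω j := by
          refine Finset.sum_congr rfl fun j hj => ?_
          rw [Finset.mem_range] at hj
          rw [if_pos (Nat.le_add_right _ _)]
          congr 2
          omega
      _ = ∑ j : Fin (k + 1), a (d - k + j.1) * ω j := by
          rw [← Fin.sum_univ_eq_sum_range (fun j => a (d - k + j) * pad ω j)]
          refine Finset.sum_congr rfl fun j _ => ?_
          simp [pad, j.isLt]
      _ = 0 := this
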